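/- Let W ≤ S_d be a permutation group acting diagonally on [0,n]^d, let χ be a one-dimensional ℚ-valued character of W with kernel H, and call a W-orbit O a χ-orbit if χ restricted to the stabilizer of any point of O is trivial. Then Σ_O w(O) over all χ-orbits O, where w(O) = x_{j_1}···x_{j_d} for any (j_1,…,j_d) ∈ O, equals the generalized cycle index Z(χ; p_1,…,p_d) = |W|^{-1} Σ_{σ∈W} χ(σ) p_1^{c_1(σ)}···p_d^{c_d(σ)}, with p_s = x_0^s + ··· + x_n^s. (Generalized Pólya theorem.) -/

import Mathlib

open MvPolynomial

/-- The number `c_s(σ)` of cycles of length `s` in the cyclic decomposition of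
a permutation `σ` of a finite set (fixed points count as cycles of length 1). -/
def cycleCount {β : Type*} [Fintype β] [DecidableEq β]
    (σ : Equiv.Perm β) (s : ℕ) : ℕ :=
  if s = 1 then Fintype.card β - σ.support.card else Multiset.count s σ.cycleType

open Finset Equiv Equiv.Perm

section Cyc
variable {β : Type*} [Fintype β] [DecidableEq β]

/-- The setoid on `β` whose classes are the cycles of `σ`. -/
def cycSetoid (σ : Equiv.Perm β) : Setoid β :=
  ⟨σ.SameCycle, ⟨fun _ => Equiv.Perm.SameCycle.refl σ _, fun h => h.symm, fun h h' => h.trans h'⟩⟩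

lemma mk_eq_mk (σ : Equiv.Perm β) {x y : β} :
    Quotient.mk (cycSetoid σ) x = Quotient.mk (cycSetoid σ) y ↔ σ.SameCycle x y :=
  ⟨Quotient.exact, fun h => Quotient.sound h⟩

instance (σ : Equiv.Perm β) : DecidableEq (Quotient (cycSetoid σ)) :=
  fun a b => Quotient.recOnSubsingleton₂ a b fun x y =>
    decidable_of_iff (σ.SameCycle x y) (Iff.symm (mk_eq_mk σ))

/-- Size of the cycle corresponding to `q`. -/
def classSize (σ : Equiv.Perm β) (q : Quotient (cycSetoid σ)) : ℕ :=
  (univ.filter fun b => Quotient.mk (cycSetoid σ) b = q).card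

lemma fiber_mk (σ : Equiv.Perm β) (b : β) :
    (univ.filter fun y => Quotient.mk (cycSetoid σ) y = Quotient.mk (cycSetoid σ) b) =
      univ.filter fun y => σ.SameCycle b y := by
  ext y
  simp only [mem_filter, mem_univ, true_and]
  rw [mk_eq_mk]
  exact ⟨fun h => h.symm, fun h => h.symm⟩

lemma classSize_mk (σ : Equiv.Perm β) (b : β) :
    classSize σ (Quotient.mk (cycSetoid σ) b) =
      if σ b = b then 1 else (σ.cycleOf b).support.card := by
  rw [classSize, fiber_mk]
  split_ifs with h
  · rw [Finset.card_eq_one]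
    refine ⟨b, ?_⟩
    ext y
    simp only [mem_filter, mem_univ, true_and, mem_singleton]
    constructor
    · rintro ⟨i, rfl⟩
      exact zpow_apply_eq_self_of_apply_eq_self h i
    · rintro rfl; exact Equiv.Perm.SameCycle.refl σ _
  · congr 1
    ext y
    simp only [mem_filter, mem_univ, true_and]
    rw [Equiv.Perm.mem_support_cycleOf_iff]
    exact ⟨fun hy => ⟨hy, Equiv.Perm.mem_support.2 h⟩, fun hy => hy.1⟩

end Cyc

section Cyc2
variable {β : Type*} [Fintype β] [DecidableEq β]

instance (σ : Equiv.Perm β) : Fintype (Quotient (cycSetoid σ)) :=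
  @Quotient.fintype _ _ (cycSetoid σ) (fun x y => inferInstanceAs (Decidable (σ.SameCycle x y)))

/-- The cycle of `σ` through the class `q`. -/
def cycOf (σ : Equiv.Perm β) : Quotient (cycSetoid σ) → Equiv.Perm β :=
  Quotient.lift σ.cycleOf fun _ _ h => h.cycleOf_eq

lemma card_classes_eq_cycleCount (σ : Equiv.Perm β) (s : ℕ) :
    (univ.filter fun q : Quotient (cycSetoid σ) => classSize σ q = s).card =
      cycleCount σ s := by
  rcases eq_or_ne s 1 with rfl | hs
  · rw [cycleCount, if_pos rfl, ← Finset.card_compl σ.support]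
    symm
    refine Finset.card_nbij (fun b => Quotient.mk (cycSetoid σ) b) ?_ ?_ ?_
    · intro b hb
      simp only [Finset.mem_coe, Finset.mem_compl, Equiv.Perm.notMem_support] at hb
      simp [classSize_mk, hb]
    · intro b hb b' hb' h
      simp only [Finset.coe_compl, Set.mem_compl_iff, Finset.mem_coe,
        Equiv.Perm.notMem_support] at hb hb'
      obtain ⟨i, rfl⟩ := (mk_eq_mk σ).1 h
      exact (zpow_apply_eq_self_of_apply_eq_self hb i).symm
    · intro q hq
      obtain ⟨b, rfl⟩ := Quotient.exists_rep q
      simp only [Finset.coe_filter, Set.mem_setOf_eq, mem_univ, true_and] at hq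
      rw [classSize_mk] at hq
      by_cases h : σ b = b
      · exact ⟨b, by simpa [Equiv.Perm.notMem_support], rfl⟩
      · rw [if_neg h] at hq
        have h2 : 2 ≤ (σ.cycleOf b).support.card :=
          two_le_card_support_cycleOf_iff.2 h
        omega
  · rw [cycleCount, if_neg hs, Equiv.Perm.cycleType_def, Multiset.count_map,
      ← Finset.filter_val, ← Finset.card_def]
    refine Finset.card_nbij (cycOf σ) ?_ ?_ ?_
    · intro q hq
      simp only [mem_coe, mem_filter, mem_univ, true_and] at hq ⊢
      obtain ⟨b, rfl⟩ := Quotient.exists_rep q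
      rw [classSize_mk] at hq
      by_cases h : σ b = b
      · rw [if_pos h] at hq; exact absurd hq.symm hs
      · rw [if_neg h] at hq
        refine ⟨Equiv.Perm.cycleOf_mem_cycleFactorsFinset_iff.2 (Equiv.Perm.mem_support.2 h), ?_⟩
        simp only [Function.comp_apply]
        exact hq.symm
    · intro q hq q' hq' h
      simp only [Finset.coe_filter, Set.mem_setOf_eq, mem_univ, true_and] at hq hq'
      obtain ⟨b, rfl⟩ := Quotient.exists_rep q
      obtain ⟨b', rfl⟩ := Quotient.exists_rep q'
      rw [classSize_mk] at hq hq'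
      have hb : σ b ≠ b := by
        intro hfix; rw [if_pos hfix] at hq; exact hs hq.symm
      have hb' : σ b' ≠ b' := by
        intro hfix; rw [if_pos hfix] at hq'; exact hs hq'.symm
      have hcyc : σ.cycleOf b = σ.cycleOf b' := h
      have : b' ∈ (σ.cycleOf b').support :=
        Equiv.Perm.mem_support_cycleOf_iff.2 ⟨Equiv.Perm.SameCycle.refl σ _,
          Equiv.Perm.mem_support.2 hb'⟩
      rw [← hcyc, Equiv.Perm.mem_support_cycleOf_iff] at this
      exact Quotient.sound this.1
    · intro c hc
      simp only [Finset.coe_filter, Set.mem_setOf_eq] at hc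
      obtain ⟨hcf, hcs⟩ := hc
      have hcyc := (Equiv.Perm.mem_cycleFactorsFinset_iff.1 hcf).1
      obtain ⟨b, hb⟩ := Finset.card_pos.1 (lt_of_lt_of_le (by norm_num)
        hcyc.two_le_card_support)
      have hbσ : σ b ≠ b := by
        have := (Equiv.Perm.mem_cycleFactorsFinset_iff.1 hcf).2 b hb
        rw [← this]
        exact Equiv.Perm.mem_support.1 hb
      have hceq : c = σ.cycleOf b := Equiv.Perm.cycle_is_cycleOf hb hcf
      refine ⟨Quotient.mk (cycSetoid σ) b, ?_, ?_⟩
      · simp only [Finset.coe_filter, Set.mem_setOf_eq, mem_univ, true_and]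
        rw [classSize_mk, if_neg hbσ, ← hceq]
        simpa [Function.comp] using hcs.symm
      · show σ.cycleOf b = c
        exact hceq.symm
  end Cyc2

section Cyc3
variable {β : Type*} [Fintype β] [DecidableEq β]

lemma invariant_of_fixed {γ : Type*} (σ : Equiv.Perm β) (f : β → γ) (hf : f ∘ σ = f)
    {x y : β} (h : σ.SameCycle x y) : f x = f y := by
  have hstep : ∀ x, f (σ x) = f x := fun x => congrFun hf x
  have hpow : ∀ (k : ℕ) (x : β), f ((σ ^ k) x) = f x := by
    intro k
    induction k with
    | zero => simp
    | succ m ih => intro x; rw [pow_succ, Equiv.Perm.mul_apply, ih, hstep]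
  obtain ⟨i, rfl⟩ := h
  induction i using Int.rec with
  | ofNat n => exact (hpow n x).symm
  | negSucc n =>
      have hz : ((n + 1 : ℕ) : ℤ) + Int.negSucc n = 0 := by
        push_cast [Int.negSucc_eq]; ring
      have : (σ ^ (n + 1)) ((σ ^ Int.negSucc n) x) = x := by
        rw [← Equiv.Perm.mul_apply, ← zpow_natCast, ← zpow_add, hz]
        simp
      calc f x = f ((σ ^ (n + 1)) ((σ ^ Int.negSucc n) x)) := by rw [this]
    _ = f ((σ ^ Int.negSucc n) x) := hpow _ _

lemma cycle_index_eq (σ : Equiv.Perm β) (n : ℕ) :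
    (∏ s ∈ Finset.Icc 1 (Fintype.card β),
        (∑ i : Fin (n + 1), (X i : MvPolynomial (Fin (n + 1)) ℚ) ^ s) ^ cycleCount σ s) =
      ∑ f ∈ univ.filter fun f : β → Fin (n + 1) => f ∘ σ = f, ∏ b, X (f b) := by
  set p : ℕ → MvPolynomial (Fin (n + 1)) ℚ :=
    fun s => ∑ i : Fin (n + 1), (X i : MvPolynomial (Fin (n + 1)) ℚ) ^ s with hp
  have hmaps : ∀ q ∈ (univ : Finset (Quotient (cycSetoid σ))),
      classSize σ q ∈ Finset.Icc 1 (Fintype.card β) := by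
    intro q _
    obtain ⟨b, rfl⟩ := Quotient.exists_rep q
    refine Finset.mem_Icc.2 ⟨?_, ?_⟩
    · rw [Nat.one_le_iff_ne_zero, ← Nat.pos_iff_ne_zero, classSize, Finset.card_pos]
      exact ⟨b, by simp⟩
    · exact le_trans (Finset.card_filter_le _ _) (by simp)
  have step1 : (∏ s ∈ Finset.Icc 1 (Fintype.card β), p s ^ cycleCount σ s) =
      ∏ q : Quotient (cycSetoid σ), p (classSize σ q) := by
    rw [← Finset.prod_fiberwise_of_maps_to' hmaps p]
    refine Finset.prod_congr rfl fun s _ => ?_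
    rw [Finset.prod_const, card_classes_eq_cycleCount]
  have step2 : (∏ q : Quotient (cycSetoid σ), p (classSize σ q)) =
      ∑ g : Quotient (cycSetoid σ) → Fin (n + 1),
        ∏ q : Quotient (cycSetoid σ), (X (g q) : MvPolynomial (Fin (n + 1)) ℚ) ^ classSize σ q := by
    rw [hp]
    rw [Finset.prod_univ_sum (fun _ => (univ : Finset (Fin (n + 1))))
      (fun q i => (X i : MvPolynomial (Fin (n + 1)) ℚ) ^ classSize σ q)]
    rw [Fintype.piFinset_univ]
  have step3 : (∑ g : Quotient (cycSetoid σ) → Fin (n + 1),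
        ∏ q : Quotient (cycSetoid σ), (X (g q) : MvPolynomial (Fin (n + 1)) ℚ) ^ classSize σ q) =
      ∑ f ∈ univ.filter fun f : β → Fin (n + 1) => f ∘ σ = f, ∏ b, X (f b) := by
    refine Finset.sum_nbij' (fun g => g ∘ Quotient.mk (cycSetoid σ))
      (fun f q => f q.out) ?_ ?_ ?_ ?_ ?_
    · intro g _
      simp only [mem_filter, mem_univ, true_and]
      funext b
      show g (Quotient.mk (cycSetoid σ) (σ b)) = g (Quotient.mk (cycSetoid σ) b)
      congr 1
      exact Quotient.sound (⟨-1, by simp⟩ : σ.SameCycle (σ b) b)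
    · intro f _; exact mem_univ _
    · intro g _
      funext q
      show g (Quotient.mk (cycSetoid σ) q.out) = g q
      rw [Quotient.out_eq]
    · intro f hf
      simp only [mem_filter, mem_univ, true_and] at hf
      funext b
      show f (Quotient.mk (cycSetoid σ) b).out = f b
      exact invariant_of_fixed σ f hf
        ((mk_eq_mk σ).1 (Quotient.out_eq (Quotient.mk (cycSetoid σ) b)))
    · intro g _
      simp only [Function.comp_apply]
      rw [← Finset.prod_fiberwise_of_maps_to' (fun (b : β) _ => mem_univ
        (Quotient.mk (cycSetoid σ) b)) (fun q => (X (g q) : MvPolynomial (Fin (n + 1)) ℚ))]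
      refine Finset.prod_congr rfl fun q _ => ?_
      rw [Finset.prod_const]
      rfl
  rw [step1, step2, step3]

end Cyc3

section CharSum
variable {G : Type*} [Group G] [Fintype G]

lemma char_sum_eq_zero (χ : G →* ℚˣ) (S : Finset G)
    (hmul : ∀ a ∈ S, ∀ b ∈ S, a * b ∈ S) (hinv : ∀ a ∈ S, a⁻¹ ∈ S)
    (hne : ∃ τ ∈ S, χ τ ≠ 1) : ∑ σ ∈ S, (χ σ : ℚ) = 0 := by
  obtain ⟨τ, hτS, hτ⟩ := hne
  have hbij : ∑ σ ∈ S, ((χ (τ * σ) : ℚˣ) : ℚ) = ∑ σ ∈ S, ((χ σ : ℚˣ) : ℚ) := by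
    refine Finset.sum_nbij' (fun σ => τ * σ) (fun σ => τ⁻¹ * σ) ?_ ?_ ?_ ?_ ?_
    · exact fun a ha => hmul τ hτS a ha
    · exact fun a ha => hmul τ⁻¹ (hinv τ hτS) a ha
    · intro a _; group
    · intro a _; group
    · intro a _; rfl
  have hmulout : ∑ σ ∈ S, ((χ (τ * σ) : ℚˣ) : ℚ) = (χ τ : ℚ) * ∑ σ ∈ S, ((χ σ : ℚˣ) : ℚ) := by
    rw [Finset.mul_sum]
    refine Finset.sum_congr rfl fun a _ => ?_
    rw [map_mul, Units.val_mul]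
  have hχτ : (χ τ : ℚ) ≠ 1 := by
    intro h
    exact hτ (Units.ext h)
  have := hbij.symm.trans hmulout
  have h2 : ((χ τ : ℚ) - 1) * ∑ σ ∈ S, ((χ σ : ℚˣ) : ℚ) = 0 := by
    rw [sub_mul, one_mul, ← this]
    ring
  rcases mul_eq_zero.1 h2 with h | h
  · exact absurd (by linarith [sub_eq_zero.1 h]) hχτ
  · exact h

end CharSum

/-- **Statement 14 (generalized Pólya theorem).** Let `W ≤ S_d` act on
`[0,n]^d` by permuting positions and let `χ : W → ℚˣ` be a one-dimensional
character.  A `W`-orbit is a `χ`-orbit when `χ` is trivial on the stabilizer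
of its points.  If `J` is a transversal of the `χ`-orbits, then the weighted
sum `∑_O w(O) = ∑_{j∈J} x_{j_1}⋯x_{j_d}` equals the generalized cycle index
`Z(χ; p_1,…,p_d) = |W|⁻¹ ∑_{σ∈W} χ(σ) p_1^{c_1(σ)}⋯p_d^{c_d(σ)}` at the power
sums `p_s = x_0^s + ⋯ + x_n^s`. -/theorem generalized_polya_enumeration
    (d n : ℕ) (W : Subgroup (Equiv.Perm (Fin d))) [Fintype W]
    (χ : W →* ℚˣ)
    (J : Finset (Fin d → Fin (n + 1)))
    (hJ1 : ∀ j ∈ J, ∀ σ : W, j ∘ (σ : Equiv.Perm (Fin d)) = j → χ σ = 1)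
    (hJ2 : ∀ f : Fin d → Fin (n + 1),
      (∀ σ : W, f ∘ (σ : Equiv.Perm (Fin d)) = f → χ σ = 1) →
        ∃! j, j ∈ J ∧ ∃ σ ∈ W, f = j ∘ σ) :
    ∑ j ∈ J, ∏ s : Fin d, (X (j s) : MvPolynomial (Fin (n + 1)) ℚ) =
      (Nat.card W : ℚ)⁻¹ •
        ∑ σ : W, (χ σ : ℚ) •
          ∏ s ∈ Finset.Icc 1 d,
            (∑ i : Fin (n + 1), (X i : MvPolynomial (Fin (n + 1)) ℚ) ^ s) ^
              cycleCount (σ : Equiv.Perm (Fin d)) s := by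
  classical
  -- notation
  let w : (Fin d → Fin (n + 1)) → MvPolynomial (Fin (n + 1)) ℚ :=
    fun f => ∏ s : Fin d, X (f s)
  let stabF : (Fin d → Fin (n + 1)) → Finset W :=
    fun f => univ.filter fun σ : W => f ∘ (σ : Equiv.Perm (Fin d)) = f
  let good : (Fin d → Fin (n + 1)) → Prop :=
    fun f => ∀ σ : W, f ∘ (σ : Equiv.Perm (Fin d)) = f → χ σ = 1
  let orb : (Fin d → Fin (n + 1)) → Finset (Fin d → Fin (n + 1)) :=
    fun j => (univ : Finset W).image fun σ : W => j ∘ (σ : Equiv.Perm (Fin d))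
  -- composition helpers
  have hcomp : ∀ (f : Fin d → Fin (n + 1)) (a b : Equiv.Perm (Fin d)),
      f ∘ ⇑(a * b) = (f ∘ ⇑a) ∘ ⇑b := by
    intro f a b; funext x; simp [Equiv.Perm.mul_apply, Function.comp]
  have hWcomp : ∀ (f : Fin d → Fin (n + 1)) (a b : W),
      f ∘ ((a * b : W) : Equiv.Perm (Fin d)) =
        (f ∘ (a : Equiv.Perm (Fin d))) ∘ (b : Equiv.Perm (Fin d)) := by
    intro f a b
    rw [Subgroup.coe_mul]
    exact hcomp f _ _
  have hone : ∀ f : Fin d → Fin (n + 1),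
      f ∘ (((1 : W) : Equiv.Perm (Fin d)) : Fin d → Fin d) = f := by
    intro f; simp
  -- goodness is inherited along orbits
  have hgood_orb : ∀ j ∈ J, ∀ σ₀ : W, good (j ∘ (σ₀ : Equiv.Perm (Fin d))) := by
    intro j hj σ₀ σ hσ
    have h2 : j ∘ ((σ₀ * σ * σ₀⁻¹ : W) : Equiv.Perm (Fin d)) = j := by
      rw [hWcomp, hWcomp, hσ]
      rw [← hWcomp, mul_inv_cancel, hone]
    have h3 := hJ1 j hj _ h2
    rw [map_mul, map_mul, map_inv] at h3
    rwa [mul_comm (χ σ₀) (χ σ), mul_assoc, mul_inv_cancel, mul_one] at h3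
  -- stabilizer cardinality times orbit equals |W|, packaged as a sum
  have horb : ∀ j ∈ J,
      ∑ f ∈ orb j, ((stabF f).card : ℚ) • w f = (Fintype.card W : ℚ) • w j := by
    intro j hj
    have hw_orb : ∀ f ∈ orb j, w f = w j := by
      intro f hf
      obtain ⟨σ₀, -, rfl⟩ := Finset.mem_image.1 hf
      exact Equiv.prod_comp (σ₀ : Equiv.Perm (Fin d)) fun s => X (j s)
    have hcardsum : (Fintype.card W) = ∑ f ∈ orb j, (stabF f).card := by
      rw [← Finset.card_univ,
        Finset.card_eq_sum_card_fiberwise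
          (f := fun σ : W => j ∘ (σ : Equiv.Perm (Fin d))) (t := orb j)
          (fun σ _ => Finset.mem_image_of_mem _ (mem_univ σ))]
      refine Finset.sum_congr rfl fun f hf => ?_
      obtain ⟨σ₀, -, rfl⟩ := Finset.mem_image.1 hf
      refine Finset.card_nbij' (fun σ => σ₀⁻¹ * σ) (fun τ => σ₀ * τ) ?_ ?_ ?_ ?_
      · intro σ hσ
        simp only [stabF, Finset.mem_coe, mem_filter, mem_univ, true_and] at hσ ⊢
        rw [← hWcomp, mul_inv_cancel_left, hσ]
      · intro τ hτ
        simp only [stabF, Finset.mem_coe, mem_filter, mem_univ, true_and] at hτ ⊢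
        rw [hWcomp]
        exact hτ
      · intro σ _; simp only; group
      · intro τ _; simp only; group
    calc ∑ f ∈ orb j, ((stabF f).card : ℚ) • w f
        = ∑ f ∈ orb j, ((stabF f).card : ℚ) • w j :=
          Finset.sum_congr rfl fun f hf => by rw [hw_orb f hf]
      _ = ((∑ f ∈ orb j, (stabF f).card : ℕ) : ℚ) • w j := by
          rw [← Finset.sum_smul, Nat.cast_sum]
      _ = (Fintype.card W : ℚ) • w j := by rw [← hcardsum]
  -- the partition of good colorings into orbits of J
  have hpart : univ.filter good = J.biUnion orb := by
    ext f
    simp only [mem_filter, mem_univ, true_and, Finset.mem_biUnion]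
    constructor
    · intro hgf
      obtain ⟨j, ⟨hjJ, σ, hσW, hfeq⟩, -⟩ := hJ2 f hgf
      exact ⟨j, hjJ, Finset.mem_image.2 ⟨⟨σ, hσW⟩, mem_univ _, hfeq.symm⟩⟩
    · rintro ⟨j, hjJ, hf⟩
      obtain ⟨σ₀, -, rfl⟩ := Finset.mem_image.1 hf
      exact hgood_orb j hjJ σ₀
  have hdisj : (J : Set (Fin d → Fin (n + 1))).PairwiseDisjoint orb := by
    intro j hj j' hj' hne
    refine Finset.disjoint_left.2 fun f hf hf' => hne ?_
    obtain ⟨σ₀, -, rfl⟩ := Finset.mem_image.1 hf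
    have hgf : good (j ∘ (σ₀ : Equiv.Perm (Fin d))) := hgood_orb j hj σ₀
    obtain ⟨k, -, huniq⟩ := hJ2 _ hgf
    obtain ⟨σ₁, -, heq⟩ := Finset.mem_image.1 hf'
    have h1 : j = k := huniq j ⟨hj, (σ₀ : Equiv.Perm (Fin d)), σ₀.2, rfl⟩
    have h2 : j' = k := huniq j' ⟨hj', (σ₁ : Equiv.Perm (Fin d)), σ₁.2, heq.symm⟩
    rw [h1, h2]
  -- the main computation
  have key : (∑ σ : W, (χ σ : ℚ) •
          ∏ s ∈ Finset.Icc 1 d,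
            (∑ i : Fin (n + 1), (X i : MvPolynomial (Fin (n + 1)) ℚ) ^ s) ^
              cycleCount (σ : Equiv.Perm (Fin d)) s) =
      (Fintype.card W : ℚ) • ∑ j ∈ J, w j := by
    calc ∑ σ : W, (χ σ : ℚ) •
          ∏ s ∈ Finset.Icc 1 d,
            (∑ i : Fin (n + 1), (X i : MvPolynomial (Fin (n + 1)) ℚ) ^ s) ^
              cycleCount (σ : Equiv.Perm (Fin d)) s
        = ∑ σ : W, ∑ f : Fin d → Fin (n + 1),
            if f ∘ (σ : Equiv.Perm (Fin d)) = f then (χ σ : ℚ) • w f else 0 := by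
          refine Finset.sum_congr rfl fun σ _ => ?_
          have h := cycle_index_eq (σ : Equiv.Perm (Fin d)) n
          rw [Fintype.card_fin] at h
          rw [h, Finset.smul_sum, Finset.sum_filter]
      _ = ∑ f : Fin d → Fin (n + 1), ∑ σ : W,
            if f ∘ (σ : Equiv.Perm (Fin d)) = f then (χ σ : ℚ) • w f else 0 :=
          Finset.sum_comm
      _ = ∑ f : Fin d → Fin (n + 1), (∑ σ ∈ stabF f, (χ σ : ℚ)) • w f := by
          refine Finset.sum_congr rfl fun f _ => ?_
          rw [Finset.sum_smul, Finset.sum_filter]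
      _ = ∑ f ∈ univ.filter good, ((stabF f).card : ℚ) • w f := by
          rw [Finset.sum_filter]
          refine Finset.sum_congr rfl fun f _ => ?_
          by_cases hgf : good f
          · rw [if_pos hgf]
            congr 1
            have hall : ∀ σ ∈ stabF f, ((χ σ : ℚˣ) : ℚ) = 1 := by
              intro σ hσ
              rw [hgf σ (Finset.mem_filter.1 hσ).2, Units.val_one]
            rw [Finset.sum_congr rfl hall, Finset.sum_const, nsmul_eq_mul, mul_one]
          · rw [if_neg hgf]
            have hzero : ∑ σ ∈ stabF f, (χ σ : ℚ) = 0 := by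
              refine char_sum_eq_zero χ (stabF f) ?_ ?_ ?_
              · intro a ha b hb
                simp only [stabF, mem_filter, mem_univ, true_and] at ha hb ⊢
                rw [hWcomp, ha, hb]
              · intro a ha
                simp only [stabF, mem_filter, mem_univ, true_and] at ha ⊢
                conv_lhs => rw [← ha]
                rw [← hWcomp, mul_inv_cancel, hone]
              · simp only [good, not_forall] at hgf
                obtain ⟨τ, hτ1, hτ2⟩ := hgf
                exact ⟨τ, Finset.mem_filter.2 ⟨mem_univ _, hτ1⟩, hτ2⟩
            rw [hzero, zero_smul]
      _ = ∑ j ∈ J, ∑ f ∈ orb j, ((stabF f).card : ℚ) • w f := by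
          rw [hpart, Finset.sum_biUnion hdisj]
      _ = ∑ j ∈ J, (Fintype.card W : ℚ) • w j :=
          Finset.sum_congr rfl fun j hj => horb j hj
      _ = (Fintype.card W : ℚ) • ∑ j ∈ J, w j := by rw [Finset.smul_sum]
  rw [key, Nat.card_eq_fintype_card, smul_smul, inv_mul_cancel₀, one_smul]
  exact Nat.cast_ne_zero.2 Fintype.card_ne_zero
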